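/- arXiv:2307.12851 — 7 statements merged into one kernel-verified Lean document; each statement's English description precedes it below -/
import Mathlib

section
/- For the logistic loss ℓ(y, ŷ) = 2·log(1 + exp(−y·ŷ)), for any y ∈ {−1, +1} and any ŷ with |ŷ| ≤ 1, the derivative satisfies |−∂ℓ/∂ŷ(y, ŷ) − y| ≤ 2|ŷ|. -/
lemma logistic_aux (t : ℝ) :
    |2 * Real.exp (-t) / (1 + Real.exp (-t)) - 1| ≤ 2 * |t| := by
  have hu : 0 < Real.exp (-t) := Real.exp_pos _
  set u := Real.exp (-t) with hudef
  have h1 : 0 < 1 + u := by linarith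
  have key : |u - 1| ≤ 2 * |t| * (1 + u) := by
    rcases le_or_gt 0 t with ht | ht
    · have h2 : 1 - t ≤ u := by
        have := Real.add_one_le_exp (-t); linarith
      have hu1 : u ≤ 1 := by
        calc u ≤ Real.exp 0 := Real.exp_le_exp.mpr (by linarith)
        _ = 1 := Real.exp_zero
      rw [abs_of_nonpos (by linarith : u - 1 ≤ 0), abs_of_nonneg ht]
      nlinarith
    · have h3 : (1 + t) * u ≤ 1 := by
        have h4 : 1 + t ≤ Real.exp t := by have := Real.add_one_le_exp t; linarith
        have h5 : Real.exp t * u = 1 := by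
          rw [hudef, ← Real.exp_add]; simp
        nlinarith
      have hu1 : 1 ≤ u := by
        have := Real.add_one_le_exp (-t); rw [← hudef] at this; linarith
      rw [abs_of_nonneg (by linarith : (0:ℝ) ≤ u - 1), abs_of_neg ht]
      nlinarith
  have heq : 2 * u / (1 + u) - 1 = (u - 1) / (1 + u) := by
    field_simp; ring
  rw [heq, abs_div, abs_of_pos h1, div_le_iff₀ h1]
  exact key

/-- Logistic loss ℓ(y, yh) = 2·log(1 + exp(−y·yh)): for y ∈ {−1, +1} and |yh| ≤ 1,
    |−∂ℓ/∂yh(y, yh) − y| = |2y·exp(−y·yh)/(1 + exp(−y·yh)) − y| ≤ 2|yh|. -/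
theorem logistic_loss_deriv_bound (y yh : ℝ) (hy : y = 1 ∨ y = -1) (hyh : |yh| ≤ 1) :
    |2 * y * Real.exp (-(y * yh)) / (1 + Real.exp (-(y * yh))) - y| ≤ 2 * |yh| := by
  rcases hy with rfl | rfl
  · simpa using logistic_aux yh
  · have := logistic_aux (-yh)
    simp only [neg_neg, abs_neg] at this
    have heq : 2 * (-1) * Real.exp (-(-1 * yh)) / (1 + Real.exp (-(-1 * yh))) - (-1)
        = -(2 * Real.exp yh / (1 + Real.exp yh) - 1) := by ring_nf
    rw [heq, abs_neg]
    convert this using 3 <;> ring_nf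
end

section
/- Under the μ-separation assumption with μ > 0 and X_min = min_i ‖x_i‖ > 0, every unit vector x_c in the conic hull K = {Σ_i a_i x_i y_i : a_i ≥ 0} \ {0} satisfies: for every i with y_i = +1, ⟨x_c, x_i⟩ ≥ μ X_min > 0, and for every i with y_i = −1, ⟨x_c, x_i⟩ ≤ −μ X_min < 0. In particular, x_c ∈ S_+ = {z : ⟨x_i, z⟩ > 0 ⟺ y_i > 0 for all i}. -/
/-- Every unit vector in the conic hull K of the signed data is uniformly activated by the
    positive data and deactivated by the negative data; in particular it lies in S_+. -/
theorem conic_hull_unit_in_Splus {D n : ℕ}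
    (x : Fin n → EuclideanSpace ℝ (Fin D)) (y : Fin n → ℝ)
    (μ Xmin : ℝ) (hμ : 0 < μ) (hXmin : 0 < Xmin)
    (hy : ∀ i, y i = 1 ∨ y i = -1)
    (hmin : ∀ i, Xmin ≤ ‖x i‖)
    (hsep : ∀ i j, μ * (‖x i‖ * ‖x j‖) ≤ (inner ℝ (y i • x i) (y j • x j) : ℝ))
    (a : Fin n → ℝ) (ha : ∀ j, 0 ≤ a j)
    (xc : EuclideanSpace ℝ (Fin D))
    (hxc : xc = ∑ j, a j • (y j • x j)) (hunit : ‖xc‖ = 1) :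
    0 < μ * Xmin ∧
    (∀ i, y i = 1 → μ * Xmin ≤ (inner ℝ xc (x i) : ℝ)) ∧
    (∀ i, y i = -1 → (inner ℝ xc (x i) : ℝ) ≤ -(μ * Xmin)) ∧
    (∀ i, 0 < (inner ℝ (x i) xc : ℝ) ↔ 0 < y i) := by
  have hS : (1:ℝ) ≤ ∑ j, a j * ‖x j‖ := by
    calc (1:ℝ) = ‖xc‖ := hunit.symm
    _ ≤ ∑ j, ‖a j • (y j • x j)‖ := by rw [hxc]; exact norm_sum_le _ _
    _ = ∑ j, a j * ‖x j‖ := by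
        refine Finset.sum_congr rfl fun j _ => ?_
        rw [norm_smul, norm_smul]
        rcases hy j with h | h <;> simp [h, abs_of_nonneg (ha j)]
  have key : ∀ i, μ * Xmin ≤ (inner ℝ xc (y i • x i) : ℝ) := by
    intro i
    have hrew : (inner ℝ xc (y i • x i) : ℝ)
        = ∑ j, a j * (inner ℝ (y j • x j) (y i • x i) : ℝ) := by
      rw [hxc, sum_inner]
      exact Finset.sum_congr rfl fun j _ => real_inner_smul_left _ _ _
    rw [hrew]
    calc μ * Xmin = μ * Xmin * 1 := by ring
    _ ≤ μ * Xmin * ∑ j, a j * ‖x j‖ :=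
        mul_le_mul_of_nonneg_left hS (le_of_lt (mul_pos hμ hXmin))
    _ ≤ ∑ j, a j * (inner ℝ (y j • x j) (y i • x i) : ℝ) := by
        rw [Finset.mul_sum]
        refine Finset.sum_le_sum fun j _ => ?_
        have h1 := hsep j i
        have hxi := hmin i
        have hxj : (0:ℝ) ≤ ‖x j‖ := norm_nonneg _
        have haj := ha j
        nlinarith [mul_nonneg haj (sub_nonneg.mpr h1),
          mul_nonneg (mul_nonneg (mul_nonneg (le_of_lt hμ) haj) hxj) (sub_nonneg.mpr hxi)]
  have hpos : 0 < μ * Xmin := mul_pos hμ hXmin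
  have hplus : ∀ i, y i = 1 → μ * Xmin ≤ (inner ℝ xc (x i) : ℝ) := by
    intro i h
    have := key i
    rwa [h, one_smul] at this
  have hminus : ∀ i, y i = -1 → (inner ℝ xc (x i) : ℝ) ≤ -(μ * Xmin) := by
    intro i h
    have := key i
    rw [h, neg_one_smul, inner_neg_right] at this
    linarith
  refine ⟨hpos, hplus, hminus, fun i => ?_⟩
  rw [real_inner_comm]
  rcases hy i with h | h
  · constructor
    · intro _; rw [h]; norm_num
    · intro _; linarith [hplus i h]
  · constructor
    · intro hc; linarith [hminus i h]
    · intro hc; rw [h] at hc; linarith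
end

section
/- Consider gradient flow on L_lin(W, v) = Σ_{i=1}^n ℓ(y_i, v^T W^T x_i) with exponential loss ℓ(y, ŷ) = exp(−y ŷ), where W ∈ ℝ^{D×h}, v ∈ ℝ^h. Suppose the data is linearly separable with margin γ > 0: there exists a unit vector z with y_i⟨z, x_i⟩ ≥ γ for all i. Then along the gradient flow, dL_lin/dt ≤ −‖v‖² γ² L_lin². -/
section aux

variable {n D h : ℕ}

private lemma swap_sum_aux (g : Fin n → ℝ) (x : Fin n → Fin D → ℝ) (c : Fin D → ℝ) :
    ∑ i, g i * (∑ d, x i d * c d) = ∑ d, (∑ i, g i * x i d) * c d := by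
  calc ∑ i, g i * (∑ d, x i d * c d) = ∑ i, ∑ d, g i * x i d * c d := by
        refine Finset.sum_congr rfl fun i _ => ?_
        rw [Finset.mul_sum]
        exact Finset.sum_congr rfl fun d _ => by ring
    _ = ∑ d, ∑ i, g i * x i d * c d := Finset.sum_comm
    _ = ∑ d, (∑ i, g i * x i d) * c d := by
        refine Finset.sum_congr rfl fun d _ => ?_
        rw [Finset.sum_mul]

end aux

/-- Gradient flow on the linear-network exponential loss L(W,v) = Σᵢ exp(−yᵢ vᵀWᵀxᵢ):
    with a margin-γ linearly separable dataset, dL/dt ≤ −‖v‖²γ²L². -/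
theorem linear_net_exp_loss_decrease {D h n : ℕ}
    (x : Fin n → Fin D → ℝ) (y : Fin n → ℝ)
    (hy : ∀ i, y i = 1 ∨ y i = -1)
    (γ : ℝ) (hγ : 0 < γ) (z : Fin D → ℝ) (hz : ∑ d, (z d) ^ 2 = 1)
    (hmargin : ∀ i, γ ≤ y i * ∑ d, z d * x i d)
    (W : ℝ → Matrix (Fin D) (Fin h) ℝ) (v : ℝ → Fin h → ℝ)
    (f : ℝ → Fin n → ℝ)
    (hf : ∀ t i, f t i = ∑ d, x i d * (W t).mulVec (v t) d)
    (L : ℝ → ℝ)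
    (hL : ∀ t, L t = ∑ i, Real.exp (-(y i * f t i)))
    (t : ℝ)
    (hW : ∀ d k, HasDerivAt (fun s => W s d k)
        (∑ i, y i * Real.exp (-(y i * f t i)) * x i d * v t k) t)
    (hv : ∀ k, HasDerivAt (fun s => v s k)
        (∑ i, y i * Real.exp (-(y i * f t i)) * (∑ d, x i d * W t d k)) t) :
    deriv L t ≤ -((∑ k, (v t k) ^ 2) * γ ^ 2 * (L t) ^ 2) := by
  classical
  set e : Fin n → ℝ := fun i => Real.exp (-(y i * f t i)) with he
  set g : Fin n → ℝ := fun i => y i * e i with hg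
  set u : Fin D → ℝ := fun d => ∑ i, g i * x i d with hu
  set A : Fin h → ℝ := fun k => ∑ i, g i * (∑ d, x i d * W t d k) with hA
  set S : ℝ := ∑ k, (v t k) ^ 2 with hS
  set F : Fin n → ℝ := fun i => ∑ d, x i d * ∑ k, (u d * v t k * v t k + W t d k * A k)
    with hF
  have hepos : ∀ i, 0 < e i := fun i => Real.exp_pos _
  -- the derivative of each fᵢ
  have hfi : ∀ i, HasDerivAt (fun s => f s i) (F i) t := by
    intro i
    have hfun : (fun s => f s i) = fun s => ∑ d, x i d * ∑ k, W s d k * v s k := by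
      funext s
      rw [hf]
      simp [Matrix.mulVec, dotProduct]
    rw [hfun, hF]
    refine HasDerivAt.fun_sum fun d _ => ?_
    have hd : HasDerivAt (fun s => ∑ k, W s d k * v s k)
        (∑ k, (u d * v t k * v t k + W t d k * A k)) t := by
      have h0 : HasDerivAt (fun s => ∑ k, W s d k * v s k) _ t :=
        HasDerivAt.fun_sum (fun k (_ : k ∈ Finset.univ) => (hW d k).mul (hv k))
      convert h0 using 1
      refine Finset.sum_congr rfl fun k _ => ?_
      have h1 : (∑ i, y i * Real.exp (-(y i * f t i)) * x i d * v t k) = u d * v t k :=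
        (Finset.sum_mul ..).symm
      have h2 : (∑ i, y i * Real.exp (-(y i * f t i)) * (∑ d', x i d' * W t d' k)) = A k := rfl
      rw [h1, h2]
    exact hd.const_mul (x i d)
  -- the derivative of L
  have hL' : HasDerivAt L (∑ i, e i * (-(y i * F i))) t := by
    have hfun : L = fun s => ∑ i, Real.exp (-(y i * f s i)) := funext hL
    rw [hfun]
    exact HasDerivAt.fun_sum fun i _ => (((hfi i).const_mul (y i)).neg.exp)
  rw [hL'.deriv]
  -- key algebraic identity: the derivative equals -(S·Σu² + ΣA²)
  have hFi : ∀ i, F i = (∑ d, x i d * u d) * S + ∑ d, x i d * ∑ k, W t d k * A k := by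
    intro i
    rw [hF]
    have hinner : ∀ d, ∑ k, (u d * v t k * v t k + W t d k * A k)
        = u d * S + ∑ k, W t d k * A k := by
      intro d
      rw [Finset.sum_add_distrib, hS, Finset.mul_sum]
      congr 1
      exact Finset.sum_congr rfl fun k _ => by ring
    calc ∑ d, x i d * ∑ k, (u d * v t k * v t k + W t d k * A k)
        = ∑ d, (x i d * u d * S + x i d * ∑ k, W t d k * A k) := by
          refine Finset.sum_congr rfl fun d _ => ?_
          rw [hinner d, mul_add]
          ring
      _ = (∑ d, x i d * u d) * S + ∑ d, x i d * ∑ k, W t d k * A k := by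
          rw [Finset.sum_add_distrib, Finset.sum_mul]
  have hAk : ∀ k, ∑ d, u d * W t d k = A k := fun k =>
    (swap_sum_aux g x (fun d => W t d k)).symm
  have hkey : ∑ i, e i * (-(y i * F i)) = -(S * ∑ d, (u d) ^ 2 + ∑ k, (A k) ^ 2) := by
    have h0 : ∑ i, e i * (-(y i * F i)) = -(∑ i, g i * F i) := by
      rw [← Finset.sum_neg_distrib]
      refine Finset.sum_congr rfl fun i _ => ?_
      show e i * (-(y i * F i)) = -(y i * e i * F i)
      ring
    rw [h0]
    congr 1
    have hterm1 : ∑ i, g i * ((∑ d, x i d * u d) * S) = S * ∑ d, (u d) ^ 2 := by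
      have h1 : ∑ i, g i * (∑ d, x i d * u d) = ∑ d, (u d) ^ 2 := by
        rw [swap_sum_aux g x u]
        refine Finset.sum_congr rfl fun d _ => ?_
        show u d * u d = u d ^ 2
        rw [sq]
      calc ∑ i, g i * ((∑ d, x i d * u d) * S)
          = (∑ i, g i * (∑ d, x i d * u d)) * S := by
            rw [Finset.sum_mul]
            exact Finset.sum_congr rfl fun i _ => by ring
        _ = S * ∑ d, (u d) ^ 2 := by rw [h1]; ring
    have hterm2 : ∑ i, g i * (∑ d, x i d * ∑ k, W t d k * A k) = ∑ k, (A k) ^ 2 := by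
      rw [swap_sum_aux g x (fun d => ∑ k, W t d k * A k)]
      calc ∑ d, (∑ i, g i * x i d) * ∑ k, W t d k * A k
          = ∑ d, ∑ k, u d * (W t d k * A k) := by
            refine Finset.sum_congr rfl fun d _ => ?_
            show u d * ∑ k, W t d k * A k = _
            rw [Finset.mul_sum]
        _ = ∑ k, ∑ d, u d * (W t d k * A k) := Finset.sum_comm
        _ = ∑ k, (A k) ^ 2 := by
            refine Finset.sum_congr rfl fun k _ => ?_
            have h2 : ∑ d, u d * (W t d k * A k) = (∑ d, u d * W t d k) * A k := by
              rw [Finset.sum_mul]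
              exact Finset.sum_congr rfl fun d _ => by ring
            rw [h2, hAk k, sq]
    calc ∑ i, g i * F i
        = ∑ i, (g i * ((∑ d, x i d * u d) * S) + g i * (∑ d, x i d * ∑ k, W t d k * A k)) := by
          refine Finset.sum_congr rfl fun i _ => ?_
          rw [hFi i, mul_add]
      _ = S * ∑ d, (u d) ^ 2 + ∑ k, (A k) ^ 2 := by
          rw [Finset.sum_add_distrib, hterm1, hterm2]
  rw [hkey]
  -- the inequality part
  have hLnn : 0 ≤ L t := by
    rw [hL]
    exact Finset.sum_nonneg fun i _ => (Real.exp_pos _).le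
  have hPi : ∀ i, γ * e i ≤ g i * (∑ d, x i d * z d) := by
    intro i
    have h1 : g i * (∑ d, x i d * z d) = e i * (y i * ∑ d, z d * x i d) := by
      show (y i * e i) * (∑ d, x i d * z d) = _
      rw [show (∑ d, x i d * z d) = ∑ d, z d * x i d from
        Finset.sum_congr rfl fun d _ => mul_comm _ _]
      ring
    rw [h1]
    have h2 := mul_le_mul_of_nonneg_left (hmargin i) (hepos i).le
    linarith
  have hP : γ * L t ≤ ∑ d, u d * z d := by
    calc γ * L t = ∑ i, γ * e i := by rw [hL t, Finset.mul_sum]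
      _ ≤ ∑ i, g i * (∑ d, x i d * z d) := Finset.sum_le_sum fun i _ => hPi i
      _ = ∑ d, u d * z d := swap_sum_aux g x z
  have hCS : (∑ d, u d * z d) ^ 2 ≤ ∑ d, (u d) ^ 2 := by
    have h3 := Finset.sum_mul_sq_le_sq_mul_sq Finset.univ u z
    rw [hz, mul_one] at h3
    exact h3
  have hsq : (γ * L t) ^ 2 ≤ (∑ d, u d * z d) ^ 2 :=
    pow_le_pow_left₀ (mul_nonneg hγ.le hLnn) hP 2
  have hAnn : 0 ≤ ∑ k, (A k) ^ 2 := Finset.sum_nonneg fun k _ => sq_nonneg _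
  have hSnn : 0 ≤ S := by
    rw [hS]
    exact Finset.sum_nonneg fun k _ => sq_nonneg _
  have hu2 : γ ^ 2 * (L t) ^ 2 ≤ ∑ d, (u d) ^ 2 := by nlinarith
  nlinarith [mul_le_mul_of_nonneg_left hu2 hSnn]
end

section
/- Consider gradient flow on L_lin(W, v) = Σ_{i=1}^n ℓ(y_i, v^T W^T x_i) with logistic loss ℓ(y, ŷ) = 2 log(1 + exp(−y ŷ)). Suppose there exists a unit vector z with y_i⟨z, x_i⟩ ≥ γ > 0 for all i, and suppose y_i v^T W^T x_i ≥ 0 for all i. Then dL_lin/dt ≤ −(1/4)‖v‖² γ² L_lin². -/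
open Finset

/-- Key algebraic identity for the gradient-flow computation. -/
lemma key_identity {D h n : ℕ} (a : Fin n → ℝ) (x : Fin n → Fin D → ℝ)
    (Wm : Matrix (Fin D) (Fin h) ℝ) (vv : Fin h → ℝ) :
    ∑ i, a i * (∑ d, x i d * ∑ k, ((∑ j, a j * x j d * vv k) * vv k
        + Wm d k * (∑ j, a j * (∑ d', x j d' * Wm d' k))))
      = (∑ k, vv k ^ 2) * (∑ d, (∑ i, a i * x i d) ^ 2)
        + ∑ k, (∑ d, (∑ i, a i * x i d) * Wm d k) ^ 2 := by
  set A : Fin D → ℝ := fun d => ∑ i, a i * x i d with hA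
  set B : Fin h → ℝ := fun k => ∑ j, a j * (∑ d', x j d' * Wm d' k) with hB
  have hB' : ∀ k, (∑ d, A d * Wm d k) = B k := by
    intro k
    calc ∑ d, A d * Wm d k = ∑ d, ∑ i, a i * x i d * Wm d k := by
          simp [hA, Finset.sum_mul]
      _ = ∑ i, ∑ d, a i * x i d * Wm d k := Finset.sum_comm
      _ = B k := by simp [hB, Finset.mul_sum, mul_assoc]
  have step1 : ∀ i, (∑ d, x i d * ∑ k, ((∑ j, a j * x j d * vv k) * vv k
      + Wm d k * (∑ j, a j * (∑ d', x j d' * Wm d' k))))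
      = (∑ k, vv k ^ 2) * (∑ d, x i d * A d) + ∑ d, x i d * ∑ k, Wm d k * B k := by
    intro i
    have inner : ∀ d, (∑ k, ((∑ j, a j * x j d * vv k) * vv k
        + Wm d k * (∑ j, a j * (∑ d', x j d' * Wm d' k))))
        = A d * (∑ k, vv k ^ 2) + ∑ k, Wm d k * B k := by
      intro d
      rw [Finset.sum_add_distrib, Finset.mul_sum]
      congr 1
      apply Finset.sum_congr rfl
      intro k _
      rw [← Finset.sum_mul]
      ring
    calc ∑ d, x i d * ∑ k, ((∑ j, a j * x j d * vv k) * vv k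
          + Wm d k * (∑ j, a j * (∑ d', x j d' * Wm d' k)))
        = ∑ d, (x i d * (A d * (∑ k, vv k ^ 2)) + x i d * ∑ k, Wm d k * B k) := by
          apply Finset.sum_congr rfl; intro d _; rw [inner d, mul_add]
      _ = (∑ k, vv k ^ 2) * (∑ d, x i d * A d) + ∑ d, x i d * ∑ k, Wm d k * B k := by
          rw [Finset.sum_add_distrib, Finset.mul_sum]
          congr 1
          apply Finset.sum_congr rfl; intro d _; ring
  have term1 : ∑ i, a i * ((∑ k, vv k ^ 2) * (∑ d, x i d * A d))
      = (∑ k, vv k ^ 2) * (∑ d, A d ^ 2) := by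
    calc ∑ i, a i * ((∑ k, vv k ^ 2) * (∑ d, x i d * A d))
        = (∑ k, vv k ^ 2) * ∑ i, ∑ d, a i * x i d * A d := by
          rw [Finset.mul_sum]
          apply Finset.sum_congr rfl; intro i _
          rw [Finset.mul_sum, Finset.mul_sum, Finset.mul_sum]
          apply Finset.sum_congr rfl; intro d _; ring
      _ = (∑ k, vv k ^ 2) * ∑ d, ∑ i, a i * x i d * A d := by rw [Finset.sum_comm]
      _ = (∑ k, vv k ^ 2) * (∑ d, A d ^ 2) := by
          congr 1
          apply Finset.sum_congr rfl; intro d _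
          rw [← Finset.sum_mul, sq]
  have term2 : ∑ i, a i * (∑ d, x i d * ∑ k, Wm d k * B k) = ∑ k, B k ^ 2 := by
    calc ∑ i, a i * (∑ d, x i d * ∑ k, Wm d k * B k)
        = ∑ i, ∑ k, a i * ∑ d, x i d * Wm d k * B k := by
          apply Finset.sum_congr rfl; intro i _
          rw [← Finset.mul_sum]
          congr 1
          rw [Finset.sum_comm]
          apply Finset.sum_congr rfl; intro d _
          rw [Finset.mul_sum]
          apply Finset.sum_congr rfl; intro k _; ring
      _ = ∑ k, ∑ i, a i * ∑ d, x i d * Wm d k * B k := Finset.sum_comm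
      _ = ∑ k, B k ^ 2 := by
          apply Finset.sum_congr rfl; intro k _
          have : ∑ i, a i * ∑ d, x i d * Wm d k * B k
              = (∑ i, a i * ∑ d, x i d * Wm d k) * B k := by
            rw [Finset.sum_mul]
            apply Finset.sum_congr rfl; intro i _
            rw [← Finset.sum_mul, mul_assoc]
          rw [this]
          have hBk : (∑ i, a i * ∑ d, x i d * Wm d k) = B k := by
            simp [hB, Finset.mul_sum]
          rw [hBk, sq]
  calc ∑ i, a i * (∑ d, x i d * ∑ k, ((∑ j, a j * x j d * vv k) * vv k
        + Wm d k * (∑ j, a j * (∑ d', x j d' * Wm d' k))))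
      = ∑ i, (a i * ((∑ k, vv k ^ 2) * (∑ d, x i d * A d))
          + a i * (∑ d, x i d * ∑ k, Wm d k * B k)) := by
        apply Finset.sum_congr rfl; intro i _; rw [step1 i, mul_add]
    _ = (∑ k, vv k ^ 2) * (∑ d, A d ^ 2) + ∑ k, B k ^ 2 := by
        rw [Finset.sum_add_distrib, term1, term2]
    _ = _ := by
        congr 1
        apply Finset.sum_congr rfl; intro k _
        rw [hB' k]

/-- Gradient flow on the linear-network logistic loss L(W,v) = Σᵢ 2 log(1 + exp(−yᵢ vᵀWᵀxᵢ)):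
    with margin γ and nonnegative margins yᵢ vᵀWᵀxᵢ ≥ 0, dL/dt ≤ −(1/4)‖v‖²γ²L². -/
theorem linear_net_logistic_loss_decrease {D h n : ℕ}
    (x : Fin n → Fin D → ℝ) (y : Fin n → ℝ)
    (hy : ∀ i, y i = 1 ∨ y i = -1)
    (γ : ℝ) (hγ : 0 < γ) (z : Fin D → ℝ) (hz : ∑ d, (z d) ^ 2 = 1)
    (hmargin : ∀ i, γ ≤ y i * ∑ d, z d * x i d)
    (W : ℝ → Matrix (Fin D) (Fin h) ℝ) (v : ℝ → Fin h → ℝ)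
    (f : ℝ → Fin n → ℝ)
    (hf : ∀ t i, f t i = ∑ d, x i d * (W t).mulVec (v t) d)
    (L : ℝ → ℝ)
    (hL : ∀ t, L t = ∑ i, 2 * Real.log (1 + Real.exp (-(y i * f t i))))
    (t : ℝ)
    (hnonneg : ∀ i, 0 ≤ y i * f t i)
    (hW : ∀ d k, HasDerivAt (fun s => W s d k)
        (∑ i, 2 * y i * Real.exp (-(y i * f t i)) / (1 + Real.exp (-(y i * f t i)))
          * x i d * v t k) t)
    (hv : ∀ k, HasDerivAt (fun s => v s k)
        (∑ i, 2 * y i * Real.exp (-(y i * f t i)) / (1 + Real.exp (-(y i * f t i)))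
          * (∑ d, x i d * W t d k)) t) :
    deriv L t ≤ -(1 / 4 * (∑ k, (v t k) ^ 2) * γ ^ 2 * (L t) ^ 2) := by
  -- notation
  set e : Fin n → ℝ := fun i => Real.exp (-(y i * f t i)) with he
  set g : Fin n → ℝ := fun i => 2 * y i * e i / (1 + e i) with hg
  have hepos : ∀ i, 0 < e i := fun i => Real.exp_pos _
  have hden : ∀ i, 0 < 1 + e i := fun i => by have := hepos i; linarith
  have hele : ∀ i, e i ≤ 1 := by
    intro i
    have := hnonneg i
    simpa [he] using Real.exp_le_one_iff.mpr (by linarith : -(y i * f t i) ≤ 0)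
  -- derivative of f in t
  set F' : Fin n → ℝ := fun i => ∑ d, x i d * ∑ k, ((∑ j, g j * x j d * v t k) * v t k
      + W t d k * (∑ j, g j * (∑ d', x j d' * W t d' k))) with hF'
  have hfd : ∀ i, HasDerivAt (fun s => f s i) (F' i) t := by
    intro i
    have heq : (fun s => f s i) = fun s => ∑ d, x i d * ∑ k, W s d k * v s k := by
      funext s
      rw [hf s i]
      simp only [Matrix.mulVec, dotProduct]
    rw [heq, hF']
    apply HasDerivAt.fun_sum
    intro d _
    exact (HasDerivAt.fun_sum (fun k _ => ((hW d k).mul (hv k)))).const_mul (x i d)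
  -- derivative of L
  have hLd : HasDerivAt L (∑ i, 2 * ((e i * (-(y i * F' i))) / (1 + e i))) t := by
    have heq : L = fun s => ∑ i, 2 * Real.log (1 + Real.exp (-(y i * f s i))) := by
      funext s; exact hL s
    rw [heq]
    apply HasDerivAt.fun_sum
    intro i _
    have h1 : HasDerivAt (fun s => -(y i * f s i)) (-(y i * F' i)) t :=
      (((hfd i).const_mul (y i)).neg)
    have h2 : HasDerivAt (fun s => 1 + Real.exp (-(y i * f s i)))
        (Real.exp (-(y i * f t i)) * (-(y i * F' i))) t := (h1.exp).const_add 1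
    have h3 := h2.log (ne_of_gt (hden i))
    exact h3.const_mul 2
  have hderiv : deriv L t = ∑ i, 2 * ((e i * (-(y i * F' i))) / (1 + e i)) := hLd.deriv
  -- rewrite derivative as -∑ g i * F' i
  have hd2 : deriv L t = -∑ i, g i * F' i := by
    rw [hderiv, ← Finset.sum_neg_distrib]
    apply Finset.sum_congr rfl
    intro i _
    have h0 : (1 + e i) ≠ 0 := ne_of_gt (hden i)
    rw [hg]
    rw [div_mul_eq_mul_div, ← mul_div_assoc, ← neg_div]
    congr 1
    ring
  -- key identity
  have hkey : ∑ i, g i * F' i = (∑ k, (v t k) ^ 2) * (∑ d, (∑ i, g i * x i d) ^ 2)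
      + ∑ k, (∑ d, (∑ i, g i * x i d) * W t d k) ^ 2 := by
    rw [hF']
    exact key_identity g x (W t) (v t)
  -- lower bound on ∑ d, A d ^ 2 via Cauchy-Schwarz and margin
  set A : Fin D → ℝ := fun d => ∑ i, g i * x i d with hA
  -- c i = 2 e i / (1 + e i) nonnegative, ≥ log(1 + e i)
  set c : Fin n → ℝ := fun i => 2 * e i / (1 + e i) with hc
  have hcnn : ∀ i, 0 ≤ c i := fun i => by
    have := hepos i; have := hden i; positivity
  have hclog : ∀ i, Real.log (1 + e i) ≤ c i := by
    intro i
    have h1 : Real.log (1 + e i) ≤ e i := by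
      have := Real.log_le_sub_one_of_pos (hden i)
      linarith
    have h2 : e i ≤ c i := by
      rw [hc, le_div_iff₀ (hden i)]
      nlinarith [hepos i, hele i]
    linarith
  have hzA : γ * (L t / 2) ≤ ∑ d, z d * A d := by
    have hswap : ∑ d, z d * A d = ∑ i, c i * (y i * ∑ d, z d * x i d) := by
      calc ∑ d, z d * A d = ∑ d, ∑ i, z d * (g i * x i d) := by
            simp [hA, Finset.mul_sum]
        _ = ∑ i, ∑ d, z d * (g i * x i d) := Finset.sum_comm
        _ = ∑ i, c i * (y i * ∑ d, z d * x i d) := by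
            apply Finset.sum_congr rfl
            intro i _
            rw [Finset.mul_sum]
            rw [Finset.mul_sum]
            apply Finset.sum_congr rfl
            intro d _
            rw [hg, hc]
            field_simp
    rw [hswap]
    have hLval : L t / 2 = ∑ i, Real.log (1 + e i) := by
      rw [hL t, Finset.sum_div]
      apply Finset.sum_congr rfl
      intro i _
      show (2 * Real.log (1 + e i)) / 2 = Real.log (1 + e i)
      ring
    calc γ * (L t / 2) = ∑ i, γ * Real.log (1 + e i) := by
          rw [hLval, Finset.mul_sum]
      _ ≤ ∑ i, c i * (y i * ∑ d, z d * x i d) := by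
          apply Finset.sum_le_sum
          intro i _
          have hm := hmargin i
          have hlog : 0 ≤ Real.log (1 + e i) := by
            apply Real.log_nonneg
            have := hepos i; linarith
          calc γ * Real.log (1 + e i) ≤ γ * c i := by
                apply mul_le_mul_of_nonneg_left (hclog i) (le_of_lt hγ)
            _ ≤ c i * (y i * ∑ d, z d * x i d) := by
                rw [mul_comm]
                exact mul_le_mul_of_nonneg_left hm (hcnn i)
  have hLnn : 0 ≤ L t := by
    rw [hL t]
    apply Finset.sum_nonneg
    intro i _
    have : 0 ≤ Real.log (1 + Real.exp (-(y i * f t i))) := by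
      apply Real.log_nonneg
      have := Real.exp_pos (-(y i * f t i)); linarith
    linarith
  have hCS : (∑ d, z d * A d) ^ 2 ≤ ∑ d, A d ^ 2 := by
    have := Finset.sum_mul_sq_le_sq_mul_sq Finset.univ z A
    rw [hz, one_mul] at this
    exact this
  have hquarter : γ ^ 2 * (L t) ^ 2 / 4 ≤ ∑ d, A d ^ 2 := by
    have h1 : (γ * (L t / 2)) ^ 2 ≤ (∑ d, z d * A d) ^ 2 := by
      apply sq_le_sq'
      · nlinarith [mul_nonneg (le_of_lt hγ) (by linarith : (0:ℝ) ≤ L t / 2)]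
      · exact hzA
    calc γ ^ 2 * (L t) ^ 2 / 4 = (γ * (L t / 2)) ^ 2 := by ring
      _ ≤ (∑ d, z d * A d) ^ 2 := h1
      _ ≤ ∑ d, A d ^ 2 := hCS
  -- conclude
  rw [hd2, hkey]
  have hvnn : 0 ≤ ∑ k, (v t k) ^ 2 := Finset.sum_nonneg fun k _ => sq_nonneg _
  have hsq : 0 ≤ ∑ k, (∑ d, A d * W t d k) ^ 2 := Finset.sum_nonneg fun k _ => sq_nonneg _
  have h5 : (∑ k, (v t k) ^ 2) * (γ ^ 2 * (L t) ^ 2 / 4)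
      ≤ (∑ k, (v t k) ^ 2) * (∑ d, A d ^ 2) :=
    mul_le_mul_of_nonneg_left hquarter hvnn
  have : ∑ d, (∑ i, g i * x i d) ^ 2 = ∑ d, A d ^ 2 := rfl
  nlinarith [hsq]
end

section
/- Let the data satisfy μ-separation with μ > 0. Along any Caratheodory solution of gradient flow (with ReLU subgradient σ'(x) = 1_{x>0} and exponential loss), for any neuron w_j not in the dead cone S_dead = {z : ⟨z, x_i⟩ ≤ 0 ∀i} and any data index i, the quantity y_i·sign(v_j)·⟨x_i, ∇_{w_j} L⟩ is strictly positive, where L(W, v) = Σ_k exp(−y_k f(x_k; W, v)). -/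
/-- Under μ-separation, for any neuron w_j not in the dead cone, and any data index i,
    y_i · sign(v_j) · ⟨x_i, ∇_{w_j} L⟩ > 0, where
    ∇_{w_j} L = Σ_k 1_{⟨x_k,w_j⟩>0} y_k exp(−y_k f(x_k)) x_k v_j. -/
theorem activation_monotone {D n h : ℕ}
    (x : Fin n → EuclideanSpace ℝ (Fin D)) (y : Fin n → ℝ)
    (μ : ℝ) (hμ : 0 < μ)
    (hx : ∀ i, x i ≠ 0)
    (hy : ∀ i, y i = 1 ∨ y i = -1)
    (hsep : ∀ i k, μ * (‖x i‖ * ‖x k‖) ≤ (inner ℝ (y i • x i) (y k • x k) : ℝ))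
    (W : Fin h → EuclideanSpace ℝ (Fin D)) (v : Fin h → ℝ)
    (hbal : ∀ j, |v j| = ‖W j‖) (hnz : ∀ j, W j ≠ 0)
    (f : Fin n → ℝ)
    (hf : ∀ k, f k = ∑ j, v j * max (inner ℝ (x k) (W j) : ℝ) 0)
    (j : Fin h)
    (hnotdead : ∃ k, 0 < (inner ℝ (x k) (W j) : ℝ))
    (grad : EuclideanSpace ℝ (Fin D))
    (hgrad : grad = ∑ k, (if 0 < (inner ℝ (x k) (W j) : ℝ) then (1 : ℝ) else 0) •
        ((y k * Real.exp (-(y k * f k)) * v j) • x k))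
    (i : Fin n) :
    0 < y i * Real.sign (v j) * (inner ℝ (x i) grad : ℝ) := by
  have hvj : Real.sign (v j) * v j = ‖W j‖ := by
    have hb := hbal j
    rcases lt_trichotomy (v j) 0 with hv | hv | hv
    · rw [Real.sign_of_neg hv, ← hb, abs_of_neg hv]; ring
    · exfalso
      have : ‖W j‖ = 0 := by rw [← hb, hv, abs_zero]
      exact hnz j (norm_eq_zero.mp this)
    · rw [Real.sign_of_pos hv, ← hb, abs_of_pos hv]; ring
  have hvpos : 0 < Real.sign (v j) * v j := by
    rw [hvj]; exact norm_pos_iff.mpr (hnz j)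
  have hinner : ∀ k : Fin n, 0 < y i * y k * (inner ℝ (x i) (x k) : ℝ) := by
    intro k
    have h1 := hsep i k
    have h2 : (inner ℝ (y i • x i) (y k • x k) : ℝ) = y i * y k * inner ℝ (x i) (x k) := by
      rw [real_inner_smul_left, real_inner_smul_right]; ring
    have h3 : 0 < μ * (‖x i‖ * ‖x k‖) := by
      apply mul_pos hμ
      exact mul_pos (norm_pos_iff.mpr (hx i)) (norm_pos_iff.mpr (hx k))
    rw [h2] at h1
    linarith
  subst hgrad
  rw [inner_sum]
  simp only [inner_smul_right]
  rw [Finset.mul_sum]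
  apply Finset.sum_pos'
  · intro k _
    by_cases hk : 0 < (inner ℝ (x k) (W j) : ℝ)
    · rw [if_pos hk]
      have := mul_pos (mul_pos (hinner k) (Real.exp_pos (-(y k * f k)))) hvpos
      nlinarith [this]
    · rw [if_neg hk]; simp
  · obtain ⟨k, hk⟩ := hnotdead
    refine ⟨k, Finset.mem_univ k, ?_⟩
    rw [if_pos hk]
    have := mul_pos (mul_pos (hinner k) (Real.exp_pos (-(y k * f k)))) hvpos
    nlinarith [this]
end

section
/- Under gradient flow on the two-layer ReLU network with balanced initialization (v_j² = ‖w_j‖² at time 0), for any neuron j and any time t ≤ T during which max_i |f(x_i; W, v)| ≤ 2ε√h X_max W_max², the squared norm satisfies d/dt ‖w_j‖² ≤ 2n(X_max + 4ε√h X_max² W_max²)‖w_j‖², where X_max = max_i ‖x_i‖ and the loss ℓ satisfies |−∇_ŷℓ(y, ŷ) − y| ≤ 2|ŷ| for |ŷ| ≤ 1. -/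
/-- During the early phase, while max_i |f(x_i)| ≤ 2ε√h X_max W_max², the squared neuron
    norm grows at most like d/dt ‖w_j‖² ≤ 2n(X_max + 4ε√h X_max² W_max²)‖w_j‖². -/
theorem neuron_norm_growth_bound {D n h : ℕ}
    (ℓd : ℝ → ℝ → ℝ)  -- ∇_yh ℓ(y, yh)
    (hloss : ∀ y yh : ℝ, (y = 1 ∨ y = -1) → |yh| ≤ 1 → |(-ℓd y yh) - y| ≤ 2 * |yh|)
    (x : Fin n → EuclideanSpace ℝ (Fin D)) (y : Fin n → ℝ)
    (hy : ∀ i, y i = 1 ∨ y i = -1)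
    (Xmax Wmax ε : ℝ) (hXmax : ∀ i, ‖x i‖ ≤ Xmax)
    (hε : 0 ≤ ε) (hsmall : 4 * ε * Real.sqrt h * Xmax * Wmax ^ 2 ≤ 1)
    (W : ℝ → Fin h → EuclideanSpace ℝ (Fin D)) (s : Fin h → ℝ)
    (hs : ∀ j, s j = 1 ∨ s j = -1)  -- signs, with balancedness v_j = s_j ‖w_j‖
    (t : ℝ) (j : Fin h)
    (f : Fin n → ℝ)
    (hf : ∀ k, f k = ∑ j', (s j' * ‖W t j'‖) * max (inner ℝ (x k) (W t j') : ℝ) 0)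
    (hfbound : ∀ k, |f k| ≤ 2 * ε * Real.sqrt h * Xmax * Wmax ^ 2)
    (Dval : ℝ)
    (hDval : Dval = -2 * ∑ i, (if 0 < (inner ℝ (x i) (W t j) : ℝ) then (1 : ℝ) else 0) *
        ℓd (y i) (f i) * (inner ℝ (x i) (W t j) : ℝ) * s j * ‖W t j‖)
    (hderiv : HasDerivAt (fun τ => ‖W τ j‖ ^ 2) Dval t) :
    Dval ≤ 2 * n * (Xmax + 4 * ε * Real.sqrt h * Xmax ^ 2 * Wmax ^ 2) * ‖W t j‖ ^ 2 := by
  rcases Nat.eq_zero_or_pos n with hn0 | hn0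
  · subst hn0
    simp [hDval]
  have hX : 0 ≤ Xmax := le_trans (norm_nonneg _) (hXmax ⟨0, hn0⟩)
  set T : Fin n → ℝ := fun i => (if 0 < (inner ℝ (x i) (W t j) : ℝ) then (1 : ℝ) else 0) *
        ℓd (y i) (f i) * (inner ℝ (x i) (W t j) : ℝ) * s j * ‖W t j‖ with hT
  have key : ∀ i, |T i| ≤ (Xmax + 4 * ε * Real.sqrt h * Xmax ^ 2 * Wmax ^ 2) * ‖W t j‖ ^ 2 := by
    intro i
    have hsq : 0 ≤ Real.sqrt h := Real.sqrt_nonneg _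
    have habs : |(inner ℝ (x i) (W t j) : ℝ)| ≤ Xmax * ‖W t j‖ :=
      (abs_real_inner_le_norm _ _).trans (mul_le_mul_of_nonneg_right (hXmax i) (norm_nonneg _))
    have hsj : |s j| = 1 := by rcases hs j with h' | h' <;> simp [h']
    have hind : |if 0 < (inner ℝ (x i) (W t j) : ℝ) then (1:ℝ) else 0| ≤ 1 := by
      split <;> simp
    have hfb := hfbound i
    have h1 : |f i| ≤ 1 := by nlinarith
    have h2 := hloss (y i) (f i) (hy i) h1
    have hyi : |y i| = 1 := by rcases hy i with h' | h' <;> simp [h']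
    have hℓ : |ℓd (y i) (f i)| ≤ 1 + 4 * ε * Real.sqrt h * Xmax * Wmax ^ 2 := by
      have h3 : |(-ℓd (y i) (f i))| ≤ |(-ℓd (y i) (f i)) - y i| + |y i| := by
        have := abs_sub_abs_le_abs_sub (-ℓd (y i) (f i)) (y i)
        linarith [abs_nonneg ((-ℓd (y i) (f i)) - y i)]
      rw [abs_neg] at h3
      rw [hyi] at h3
      nlinarith
    have e1 : |T i| = |if 0 < (inner ℝ (x i) (W t j) : ℝ) then (1:ℝ) else 0| *
        |ℓd (y i) (f i)| * |(inner ℝ (x i) (W t j) : ℝ)| * |s j| * ‖W t j‖ := by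
      rw [hT]
      simp only [abs_mul, abs_norm]
    rw [e1, hsj, mul_one]
    have hwn : (0:ℝ) ≤ ‖W t j‖ := norm_nonneg _
    have ha : (0:ℝ) ≤ |ℓd (y i) (f i)| := abs_nonneg _
    have hb : (0:ℝ) ≤ |(inner ℝ (x i) (W t j) : ℝ)| := abs_nonneg _
    have hc : (0:ℝ) ≤ |if 0 < (inner ℝ (x i) (W t j) : ℝ) then (1:ℝ) else 0| := abs_nonneg _
    nlinarith [mul_le_mul hℓ habs hb (by nlinarith : (0:ℝ) ≤ 1 + 4 * ε * Real.sqrt h * Xmax * Wmax ^ 2),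
      mul_nonneg ha hb, mul_nonneg (mul_nonneg ha hb) hwn]
  have hsum : Dval ≤ 2 * ∑ i, |T i| := by
    rw [hDval]
    have h4 : |∑ i, T i| ≤ ∑ i, |T i| := Finset.abs_sum_le_sum_abs _ _
    have h5 : -(∑ i, T i) ≤ |∑ i, T i| := neg_le_abs _
    linarith
  have hsum2 : ∑ i, |T i| ≤ n * ((Xmax + 4 * ε * Real.sqrt h * Xmax ^ 2 * Wmax ^ 2) * ‖W t j‖ ^ 2) := by
    calc ∑ i, |T i| ≤ ∑ _i : Fin n, (Xmax + 4 * ε * Real.sqrt h * Xmax ^ 2 * Wmax ^ 2) * ‖W t j‖ ^ 2 :=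
          Finset.sum_le_sum fun i _ => key i
      _ = n * ((Xmax + 4 * ε * Real.sqrt h * Xmax ^ 2 * Wmax ^ 2) * ‖W t j‖ ^ 2) := by
          simp [Finset.sum_const, Finset.card_univ]
  linarith
end

section
/- Let a_i ∈ [1/2, 3/2] for i = 1, ..., m and let x_1, ..., x_m ∈ ℝ^D satisfy ⟨x_i, x_j⟩ ≥ 0 for all i, j, with Σ_{i,j} ⟨x_i, x_j⟩ > 0. Define x_+ = Σ_i x_i and x̃ = Σ_i a_i x_i. Then cos(x_+, x̃) ≥ 1/3. -/
/-- With weights a_i ∈ [1/2, 3/2] and pairwise nonnegative inner products, the weighted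
    aggregate x̃ = Σ a_i x_i stays aligned with x₊ = Σ x_i : cos(x₊, x̃) ≥ 1/3. -/
theorem weighted_aggregate_alignment {D m : ℕ}
    (x : Fin m → EuclideanSpace ℝ (Fin D)) (a : Fin m → ℝ)
    (ha : ∀ i, a i ∈ Set.Icc (1 / 2 : ℝ) (3 / 2))
    (hpos : ∀ i j, 0 ≤ (inner ℝ (x i) (x j) : ℝ))
    (hS : 0 < ∑ i, ∑ j, (inner ℝ (x i) (x j) : ℝ)) :
    (1 / 3 : ℝ) * (‖∑ i, x i‖ * ‖∑ i, a i • x i‖) ≤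
      (inner ℝ (∑ i, x i) (∑ i, a i • x i) : ℝ) := by
  set S : ℝ := ∑ i, ∑ j, (inner ℝ (x i) (x j) : ℝ) with hSdef
  have hnorm1 : ‖∑ i, x i‖ ^ 2 = S := by
    rw [← real_inner_self_eq_norm_sq, sum_inner]
    exact Finset.sum_congr rfl fun i _ => inner_sum _ _ _
  have hinner : (inner ℝ (∑ i, x i) (∑ i, a i • x i) : ℝ) =
      ∑ i, ∑ j, a j * (inner ℝ (x i) (x j) : ℝ) := by
    rw [sum_inner]
    congr 1; ext i
    rw [inner_sum]
    congr 1; ext j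
    rw [real_inner_smul_right]
  have hnorm2 : ‖∑ i, a i • x i‖ ^ 2 =
      ∑ i, ∑ j, a i * a j * (inner ℝ (x i) (x j) : ℝ) := by
    rw [← real_inner_self_eq_norm_sq, sum_inner]
    congr 1; ext i
    rw [real_inner_smul_left, inner_sum, Finset.mul_sum]
    congr 1; ext j
    rw [real_inner_smul_right]; ring
  have hlow : (1 / 2 : ℝ) * S ≤ (inner ℝ (∑ i, x i) (∑ i, a i • x i) : ℝ) := by
    rw [hinner, hSdef, Finset.mul_sum]
    refine Finset.sum_le_sum fun i _ => ?_
    rw [Finset.mul_sum]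
    refine Finset.sum_le_sum fun j _ => ?_
    exact mul_le_mul_of_nonneg_right (ha j).1 (hpos i j)
  have hhigh : ‖∑ i, a i • x i‖ ^ 2 ≤ (3 / 2) ^ 2 * S := by
    rw [hnorm2, hSdef, Finset.mul_sum]
    refine Finset.sum_le_sum fun i _ => ?_
    rw [Finset.mul_sum]
    refine Finset.sum_le_sum fun j _ => ?_
    refine mul_le_mul_of_nonneg_right ?_ (hpos i j)
    have hi := ha i; have hj := ha j
    nlinarith [hi.1, hi.2, hj.1, hj.2]
  have h1 : ‖∑ i, x i‖ ≤ Real.sqrt S := by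
    rw [← Real.sqrt_sq (norm_nonneg _), hnorm1]
  have h2 : ‖∑ i, a i • x i‖ ≤ (3 / 2) * Real.sqrt S := by
    have : ‖∑ i, a i • x i‖ ≤ Real.sqrt ((3 / 2) ^ 2 * S) := by
      rw [← Real.sqrt_sq (norm_nonneg _)]
      exact Real.sqrt_le_sqrt hhigh
    rwa [Real.sqrt_mul (by positivity), Real.sqrt_sq (by norm_num)] at this
  have hsq : Real.sqrt S * Real.sqrt S = S := Real.mul_self_sqrt hS.le
  calc (1 / 3 : ℝ) * (‖∑ i, x i‖ * ‖∑ i, a i • x i‖)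
      ≤ (1 / 3) * (Real.sqrt S * ((3 / 2) * Real.sqrt S)) := by
        apply mul_le_mul_of_nonneg_left _ (by norm_num)
        exact mul_le_mul h1 h2 (norm_nonneg _) (Real.sqrt_nonneg _)
    _ = (1 / 2) * S := by rw [mul_comm (Real.sqrt S)]; rw [mul_assoc, hsq]; ring
    _ ≤ _ := hlow
end
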